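/- Let H be a graph and let F be the disjoint union of graphs F_1, …, F_k, each on exactly n vertices. Then R(F, H) ≤ max_{i∈[k]} R(F_i, H) + n(k−1). -/

import Mathlib

open SimpleGraph Finset

/-- `G` embeds into `H` (a copy of `G` appears in `H`). -/
def graphEmbeds {V W : Type*} (G : SimpleGraph V) (H : SimpleGraph W) : Prop :=
  ∃ f : V → W, Function.Injective f ∧ ∀ u v, G.Adj u v → H.Adj (f u) (f v)

/-- `N` is large enough for the Ramsey property: every red/blue coloring of `K_N`
(the red graph `R`, blue graph `Rᶜ`) contains a red `G` or a blue `H`. -/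
def isRamsey {V W : Type*} (G : SimpleGraph V) (H : SimpleGraph W) (N : ℕ) : Prop :=
  ∀ R : SimpleGraph (Fin N), graphEmbeds G R ∨ graphEmbeds H Rᶜ

/-- The Ramsey number `R(G,H)`. -/
noncomputable def ramsey {V W : Type*} (G : SimpleGraph V) (H : SimpleGraph W) : ℕ :=
  sInf {N | isRamsey G H N}

/-- `t` disjoint copies of the complete graph `K_m`. -/
def kCliques (t m : ℕ) : SimpleGraph (Fin t × Fin m) where
  Adj x y := x.1 = y.1 ∧ x.2 ≠ y.2
  symm := ⟨fun x y h => ⟨h.1.symm, h.2.symm⟩⟩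
  loopless := ⟨fun x h => h.2 rfl⟩

/-- The chromatic number as a natural number. -/
noncomputable def chromNum {V : Type*} (G : SimpleGraph V) : ℕ := sInf {n | G.Colorable n}

/-- The chromatic surplus: the minimum size of a color class over all proper
colorings with `chromNum G` colors. -/
noncomputable def surplus {V : Type*} [Fintype V] (G : SimpleGraph V) : ℕ :=
  sInf {k | ∃ C : G.Coloring (Fin (chromNum G)), ∃ i : Fin (chromNum G),
    (Finset.univ.filter (fun v => C v = i)).card = k}

/-- `a` is a leaf of `G`: it has a unique neighbor. -/
def IsLeaf {V : Type*} (G : SimpleGraph V) (a : V) : Prop := ∃! w, G.Adj a w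

/-- Stretching: delete a leaf `b` and attach a new vertex (reusing the label `b`)
to the leaf `a`. -/
def isStretch {V : Type*} (T T' : SimpleGraph V) : Prop :=
  ∃ a b : V, a ≠ b ∧ IsLeaf T a ∧ IsLeaf T b ∧
    ∀ x y, T'.Adj x y ↔
      ((T.Adj x y ∧ x ≠ b ∧ y ≠ b) ∨ (x = b ∧ y = a) ∨ (x = a ∧ y = b))

/-- Expanding at a vertex `u` of degree `d` (`2 ≤ d ≤ n-2`) all of whose neighbors
are leaves except `z0`: delete a leaf `b` outside `N[u]` and attach a new vertex
(reusing the label `b`) to `u`. -/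
def isExpand {V : Type*} [Fintype V] (T T' : SimpleGraph V) : Prop :=
  ∃ u b z0 : V, T.Adj u z0 ∧ ¬ IsLeaf T z0 ∧
    (∀ z, T.Adj u z → z ≠ z0 → IsLeaf T z) ∧
    2 ≤ (T.neighborSet u).ncard ∧ (T.neighborSet u).ncard ≤ Fintype.card V - 2 ∧
    IsLeaf T b ∧ b ≠ u ∧ ¬ T.Adj u b ∧
    ∀ x y, T'.Adj x y ↔
      ((T.Adj x y ∧ x ≠ b ∧ y ≠ b) ∨ (x = b ∧ y = u) ∨ (x = u ∧ y = b))

/-- Disjoint union of `K_m` and `K_l`. -/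
def kUnion (m l : ℕ) : SimpleGraph (Fin m ⊕ Fin l) where
  Adj x y := x ≠ y ∧ ((x.isLeft ∧ y.isLeft) ∨ (x.isRight ∧ y.isRight))
  symm := ⟨fun x y h => ⟨h.1.symm, h.2.imp (fun p => ⟨p.2, p.1⟩) (fun p => ⟨p.2, p.1⟩)⟩⟩
  loopless := ⟨fun x h => h.1 rfl⟩

/-- Disjoint union of `k` graphs, each on `Fin n`. -/
def disjUnion {k n : ℕ} (Fs : Fin k → SimpleGraph (Fin n)) :
    SimpleGraph (Fin k × Fin n) where
  Adj x y := x.1 = y.1 ∧ (Fs x.1).Adj x.2 y.2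
  symm := by
    refine ⟨?_⟩
    rintro ⟨i, a⟩ ⟨j, b⟩ ⟨h1, h2⟩
    dsimp at h1 h2 ⊢
    subst h1
    exact ⟨rfl, h2.symm⟩
  loopless := by
    refine ⟨?_⟩
    rintro ⟨i, a⟩ ⟨h1, h2⟩
    exact (Fs i).irrefl h2

/-- Disjoint union of graphs `Fs i` on `Fin (n i)`. -/
def sigmaUnion {r : ℕ} {n : Fin r → ℕ} (Fs : ∀ i, SimpleGraph (Fin (n i))) :
    SimpleGraph (Σ i, Fin (n i)) where
  Adj x y := ∃ (i : Fin r) (a b : Fin (n i)), x = ⟨i, a⟩ ∧ y = ⟨i, b⟩ ∧ (Fs i).Adj a b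
  symm := by
    refine ⟨?_⟩
    rintro x y ⟨i, a, b, hx, hy, h⟩
    exact ⟨i, b, a, hy, hx, h.symm⟩
  loopless := by
    refine ⟨?_⟩
    rintro x ⟨i, a, b, hx, hy, h⟩
    rw [hx] at hy
    obtain ⟨-, hab⟩ := (Sigma.mk.inj_iff).mp hy
    exact (Fs i).irrefl (by cases eq_of_heq hab; exact h)

lemma isRamsey_mono {V W : Type*} {G : SimpleGraph V} {H : SimpleGraph W} {N N' : ℕ}
    (h : isRamsey G H N) (hle : N ≤ N') : isRamsey G H N' := by
  intro R'
  have he : Function.Injective (Fin.castLE hle) := Fin.castLE_injective hle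
  rcases h (R'.comap (Fin.castLE hle)) with ⟨f, hf, hadj⟩ | ⟨f, hf, hadj⟩
  · exact Or.inl ⟨fun u => Fin.castLE hle (f u), he.comp hf, fun u v h => hadj u v h⟩
  · refine Or.inr ⟨fun u => Fin.castLE hle (f u), he.comp hf, fun u v h => ?_⟩
    obtain ⟨hne, hn⟩ := hadj u v h
    exact ⟨fun hh => hne (he hh), hn⟩

/-- The key greedy construction. -/
lemma disjUnion_claim {W : Type*} (H : SimpleGraph W) {k n : ℕ}
    (Fs : Fin k → SimpleGraph (Fin n)) (M : ℕ)
    (hM : ∀ i, isRamsey (Fs i) H M)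
    (R : SimpleGraph (Fin (M + n * (k - 1)))) (hN : 0 < M + n * (k - 1))
    (s : Finset (Fin k)) :
    graphEmbeds H Rᶜ ∨ ∃ f : Fin k → Fin n → Fin (M + n * (k - 1)),
      (∀ i ∈ s, Function.Injective (f i)) ∧
      (∀ i ∈ s, ∀ j ∈ s, i ≠ j → ∀ a b, f i a ≠ f j b) ∧
      (∀ i ∈ s, ∀ a b, (Fs i).Adj a b → R.Adj (f i a) (f i b)) := by
  classical
  induction s using Finset.induction_on with
  | empty =>
      refine Or.inr ⟨fun _ _ => ⟨0, hN⟩, ?_, ?_, ?_⟩ <;> simp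
  | @insert i s hi ih =>
      rcases ih with hblue | ⟨f, hinj, hcross, hadj⟩
      · exact Or.inl hblue
      · -- used vertices
        set T : Finset (Fin (M + n * (k - 1))) := s.biUnion (fun j => Finset.image (f j) Finset.univ) with hT
        have hTcard : T.card ≤ n * (k - 1) := by
          calc T.card ≤ ∑ j ∈ s, (Finset.image (f j) Finset.univ).card :=
                Finset.card_biUnion_le
            _ ≤ ∑ j ∈ s, n := by
                refine Finset.sum_le_sum fun j _ => ?_
                calc (Finset.image (f j) Finset.univ).card ≤ Finset.univ.card :=
                      Finset.card_image_le
                  _ = n := by simp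
            _ = s.card * n := by rw [Finset.sum_const, smul_eq_mul]
            _ ≤ (k - 1) * n := by
                have hs : s ⊆ Finset.univ.erase i :=
                  fun j hj => Finset.mem_erase.mpr ⟨fun h => hi (h ▸ hj), Finset.mem_univ _⟩
                have := Finset.card_le_card hs
                rw [Finset.card_erase_of_mem (Finset.mem_univ i)] at this
                simpa using Nat.mul_le_mul_right n this
            _ = n * (k - 1) := Nat.mul_comm _ _
        set A : Finset (Fin (M + n * (k - 1))) := Finset.univ \ T with hA
        have hAcard : M ≤ A.card := by
          have h1 : A.card = (M + n * (k - 1)) - T.card := by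
            rw [hA, Finset.card_sdiff_of_subset (Finset.subset_univ T)]
            simp
          omega
        set m := A.card with hm
        have hRam : isRamsey (Fs i) H m := isRamsey_mono (hM i) hAcard
        set e : Fin m → Fin (M + n * (k - 1)) := fun j => ((A.orderIsoOfFin rfl) j : Fin (M + n * (k - 1))) with he
        have heinj : Function.Injective e :=
          fun a b h => (A.orderIsoOfFin rfl).injective (Subtype.ext h)
        have hemem : ∀ j, e j ∈ A := fun j => ((A.orderIsoOfFin rfl) j).2
        rcases hRam (R.comap e) with ⟨g, hg, hgadj⟩ | ⟨g, hg, hgadj⟩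
        · -- red copy of Fs i inside A
          set f' : Fin k → Fin n → Fin (M + n * (k - 1)) := Function.update f i (fun a => e (g a)) with hf'
          have hfi : f' i = fun a => e (g a) := Function.update_self i _ f
          have hfj : ∀ j, j ≠ i → f' j = f j := fun j hj => Function.update_of_ne hj _ f
          have hmemT : ∀ j ∈ s, ∀ b, f j b ∈ T := by
            intro j hj b
            exact Finset.mem_biUnion.mpr ⟨j, hj, Finset.mem_image_of_mem _ (Finset.mem_univ b)⟩
          have hdisj : ∀ a, ∀ j ∈ s, ∀ b, e (g a) ≠ f j b := by
            intro a j hj b heq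
            have := hemem (g a)
            rw [heq] at this
            exact (Finset.mem_sdiff.mp this).2 (hmemT j hj b)
          refine Or.inr ⟨f', ?_, ?_, ?_⟩
          · intro j hj
            rcases Finset.mem_insert.mp hj with rfl | hj
            · rw [hfi]; exact heinj.comp hg
            · rw [hfj j (fun h => hi (h ▸ hj))]; exact hinj j hj
          · intro j1 hj1 j2 hj2 hne a b
            rcases Finset.mem_insert.mp hj1 with h1 | h1 <;>
              rcases Finset.mem_insert.mp hj2 with h2 | h2
            · exact absurd (h1.trans h2.symm) hne
            · rw [h1, hfi, hfj j2 (fun h => hi (h ▸ h2))]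
              exact hdisj a j2 h2 b
            · rw [h2, hfi, hfj j1 (fun h => hi (h ▸ h1))]
              exact fun h => hdisj b j1 h1 a h.symm
            · rw [hfj j1 (fun h => hi (h ▸ h1)), hfj j2 (fun h => hi (h ▸ h2))]
              exact hcross j1 h1 j2 h2 hne a b
          · intro j hj a b hab
            rcases Finset.mem_insert.mp hj with rfl | hj
            · have := hgadj a b hab
              rw [SimpleGraph.comap_adj] at this
              rw [hfi]; exact this
            · rw [hfj j (fun h => hi (h ▸ hj))]; exact hadj j hj a b hab
        · -- blue copy of H
          refine Or.inl ⟨fun w => e (g w), heinj.comp hg, fun u v huv => ?_⟩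
          have h2 := hgadj u v huv
          rw [SimpleGraph.compl_adj, SimpleGraph.comap_adj] at h2
          exact ⟨fun h => h2.1 (heinj h), h2.2⟩

/-- Remark 4.2 (first part): for a disjoint union `F` of graphs `F_1,…,F_k`, each on
`n` vertices, `R(F,H) ≤ max_i R(F_i,H) + n(k-1)`. -/
theorem stmt_11 {W : Type*} (H : SimpleGraph W) (k n : ℕ)
    (Fs : Fin k → SimpleGraph (Fin n)) :
    ramsey (disjUnion Fs) H ≤
      (Finset.univ.sup fun i => ramsey (Fs i) H) + n * (k - 1) := by
  classical
  set M : ℕ := Finset.univ.sup fun i => ramsey (Fs i) H with hMdef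
  by_cases hne : ∀ i, {N | isRamsey (Fs i) H N}.Nonempty
  · -- every component Ramsey number is attained
    have hM : ∀ i, isRamsey (Fs i) H M := by
      intro i
      have hmem : isRamsey (Fs i) H (ramsey (Fs i) H) := Nat.sInf_mem (hne i)
      exact isRamsey_mono hmem (by rw [hMdef]; exact Finset.le_sup (f := fun i => ramsey (Fs i) H) (Finset.mem_univ i))
    have hRam : isRamsey (disjUnion Fs) H (M + n * (k - 1)) := by
      intro R
      by_cases hN : 0 < M + n * (k - 1)
      · rcases disjUnion_claim H Fs M hM R hN Finset.univ with hblue | ⟨f, hinj, hcross, hadj⟩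
        · exact Or.inr hblue
        · refine Or.inl ⟨fun p => f p.1 p.2, ?_, ?_⟩
          · rintro ⟨i, a⟩ ⟨j, b⟩ h
            by_cases hij : i = j
            · subst hij
              exact Prod.ext rfl (hinj i (Finset.mem_univ i) h)
            · exact absurd h (hcross i (Finset.mem_univ i) j (Finset.mem_univ j) hij a b)
          · rintro ⟨i, a⟩ ⟨j, b⟩ ⟨h1, h2⟩
            dsimp at h1 h2 ⊢
            subst h1
            exact hadj i (Finset.mem_univ i) a b h2
      · -- N = 0
        have hN0 : M + n * (k - 1) = 0 := by omega
        -- cases on k and n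
        rcases Nat.eq_zero_or_pos k with hk | hk
        · subst hk
          exact Or.inl ⟨fun p => p.1.elim0, fun p => p.1.elim0, fun p => p.1.elim0⟩
        rcases Nat.eq_zero_or_pos n with hn | hn
        · subst hn
          exact Or.inl ⟨fun p => p.2.elim0, fun p => p.2.elim0, fun p => p.2.elim0⟩
        -- n ≥ 1, M = 0 : use Ramsey of component 0 at M = 0
        have hM0 : M = 0 := by omega
        have h0 : isRamsey (Fs ⟨0, hk⟩) H (M + n * (k - 1)) :=
          isRamsey_mono (hM ⟨0, hk⟩) (Nat.le_add_right _ _)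
        rcases h0 R with ⟨g, hg, hgadj⟩ | hblue
        · exact (Fin.cast hN0 (g ⟨0, hn⟩)).elim0
        · exact Or.inr hblue
    calc ramsey (disjUnion Fs) H ≤ M + n * (k - 1) := Nat.sInf_le hRam
      _ = _ := rfl
  · -- some component has no Ramsey number: then neither does the union
    obtain ⟨i, hi⟩ := not_forall.mp hne
    rw [Set.not_nonempty_iff_eq_empty] at hi
    have hU : {N | isRamsey (disjUnion Fs) H N} = ∅ := by
      rw [Set.eq_empty_iff_forall_notMem]
      intro N hmem
      have : isRamsey (Fs i) H N := by
        intro R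
        rcases hmem R with ⟨f, hf, hadj⟩ | hblue
        · refine Or.inl ⟨fun a => f (i, a), ?_, fun a b hab => hadj (i, a) (i, b) ⟨rfl, hab⟩⟩
          intro a b h
          have := hf h
          exact (Prod.mk.injEq i a i b ▸ this).2
        · exact Or.inr hblue
      exact Set.eq_empty_iff_forall_notMem.mp hi N this
    rw [ramsey, hU, Nat.sInf_empty]
    exact Nat.zero_le _
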